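/- Let 1/2 < α ≤ 1 and let x : [0,1] → ℝ be α-Hölder continuous. Let F : ℝ × ℝ → ℝ be twice continuously differentiable with F(x,x) = 0 for all x, and set f(x) := ∂_y F(x,y)|_{y=x}. For n ∈ ℕ let t_i = i/n be the uniform partition of [0,1]. Then the difference ∑_{i=0}^{n−1} F(x(t_i), x(t_{i+1})) − ∑_{i=0}^{n−1} f(x(t_i)) (x(t_{i+1}) − x(t_i)) tends to 0 as n → ∞. -/

import Mathlib

open Filter Finset

lemma taylor_aux (F : ℝ × ℝ → ℝ) (hF : ContDiff ℝ 2 F)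
    (hdiag : ∀ a : ℝ, F (a, a) = 0)
    (f : ℝ → ℝ) (hf : ∀ a : ℝ, f a = deriv (fun y => F (a, y)) a)
    (R M : ℝ) (hMnn : 0 ≤ M)
    (hLip : ∀ p ∈ (Set.Icc (-R) R) ×ˢ (Set.Icc (-R) R), ∀ q ∈ (Set.Icc (-R) R) ×ˢ (Set.Icc (-R) R),
      ‖fderiv ℝ F p - fderiv ℝ F q‖ ≤ M * ‖p - q‖)
    (a : ℝ) (ha : a ∈ Set.Icc (-R) R) (b : ℝ) (hb : b ∈ Set.Icc (-R) R) :
    |F (a, b) - f a * (b - a)| ≤ M * (b - a) ^ 2 := by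
  have hFd : Differentiable ℝ F := hF.differentiable (by norm_num)
  set g' : ℝ → ℝ := fun y => fderiv ℝ F (a, y) (0, 1) with hg'
  have hder : ∀ y : ℝ, HasDerivAt (fun y => F (a, y)) (g' y) y := by
    intro y
    have h1 : HasDerivAt (fun y : ℝ => ((a, y) : ℝ × ℝ)) (0, 1) y :=
      (hasDerivAt_const y a).prodMk (hasDerivAt_id y)
    exact ((hFd (a, y)).hasFDerivAt.comp_hasDerivAt y h1)
  have hfa : f a = g' a := by rw [hf a]; exact (hder a).deriv
  have hsub : Set.uIcc a b ⊆ Set.Icc (-R) R := Set.uIcc_subset_Icc ha hb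
  have hφ : ∀ y ∈ Set.uIcc a b,
      HasDerivWithinAt (fun y => F (a, y) - g' a * y) (g' y - g' a) (Set.uIcc a b) y := by
    intro y _
    exact ((hder y).sub (by simpa using (hasDerivAt_id y).const_mul (g' a))).hasDerivWithinAt
  have hbound : ∀ y ∈ Set.uIcc a b, ‖g' y - g' a‖ ≤ (M * |b - a|) := by
    intro y hy
    have h1 : g' y - g' a = (fderiv ℝ F (a, y) - fderiv ℝ F (a, a)) ((0 : ℝ), (1 : ℝ)) := by
      simp [hg']
    have hyK : y ∈ Set.Icc (-R) R := hsub hy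
    have h2 : ‖fderiv ℝ F (a, y) - fderiv ℝ F (a, a)‖ ≤ M * |y - a| := by
      have := hLip (a, y) (Set.mk_mem_prod ha hyK) (a, a) (Set.mk_mem_prod ha ha)
      simpa [Prod.norm_def, abs_nonneg] using this
    have h3 : |y - a| ≤ |b - a| := Set.abs_sub_left_of_mem_uIcc hy
    have hM0 : 0 ≤ M * |y - a| := le_trans (norm_nonneg _) h2
    rw [h1]
    calc ‖(fderiv ℝ F (a, y) - fderiv ℝ F (a, a)) ((0 : ℝ), (1 : ℝ))‖
        ≤ ‖fderiv ℝ F (a, y) - fderiv ℝ F (a, a)‖ * ‖((0 : ℝ), (1 : ℝ))‖ :=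
          ContinuousLinearMap.le_opNorm _ _
      _ ≤ (M * |y - a|) * 1 := by
          apply mul_le_mul h2 _ (norm_nonneg _) hM0
          simp [Prod.norm_def]
      _ ≤ M * |b - a| := by
          rw [mul_one]
          exact mul_le_mul_of_nonneg_left h3 hMnn
  have key := Convex.norm_image_sub_le_of_norm_hasDerivWithin_le hφ hbound (convex_uIcc a b)
    Set.left_mem_uIcc Set.right_mem_uIcc
  have heq : (F (a, b) - g' a * b) - (F (a, a) - g' a * a) = F (a, b) - f a * (b - a) := by
    rw [hfa, hdiag a]; ring
  rw [heq] at key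
  have : |F (a, b) - f a * (b - a)| ≤ M * |b - a| * |b - a| := by
    simpa [Real.norm_eq_abs] using key
  calc |F (a, b) - f a * (b - a)| ≤ M * |b - a| * |b - a| := this
    _ = M * (b - a) ^ 2 := by rw [mul_assoc, ← abs_mul, ← sq, abs_sq]

/-- For an `α`-Hölder path `x` with `α > 1/2`, and a `C²` two-point function `F` vanishing
on the diagonal with first-order diagonal data `f(x) = ∂_y F(x,y)|_{y=x}`, the difference
between the generalized Riemann sums `∑ F(x(t_i), x(t_{i+1}))` and the first-order sums
`∑ f(x(t_i))(x(t_{i+1}) − x(t_i))` along the uniform partition `t_i = i/n` of `[0,1]`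
tends to `0` as `n → ∞`. -/
theorem generalized_sum_sub_leftpoint_tendsto_zero_holder
    (α : ℝ) (hα₁ : 1 / 2 < α) (hα₂ : α ≤ 1)
    (x : ℝ → ℝ)
    (hHolder : ∃ C : ℝ, ∀ s ∈ Set.Icc (0 : ℝ) 1, ∀ t ∈ Set.Icc (0 : ℝ) 1,
      |x s - x t| ≤ C * |s - t| ^ α)
    (F : ℝ × ℝ → ℝ) (hF : ContDiff ℝ 2 F)
    (hdiag : ∀ a : ℝ, F (a, a) = 0)
    (f : ℝ → ℝ) (hf : ∀ a : ℝ, f a = deriv (fun y => F (a, y)) a) :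
    Tendsto (fun n : ℕ =>
      (∑ i ∈ Finset.range n, F (x ((i : ℝ) / n), x (((i : ℝ) + 1) / n)))
      - ∑ i ∈ Finset.range n,
          f (x ((i : ℝ) / n)) * (x (((i : ℝ) + 1) / n) - x ((i : ℝ) / n)))
      atTop (nhds 0) := by
  obtain ⟨C, hC⟩ := hHolder
  have h01 : (0 : ℝ) ∈ Set.Icc (0 : ℝ) 1 := by norm_num
  have h11 : (1 : ℝ) ∈ Set.Icc (0 : ℝ) 1 := by norm_num
  have hC0 : 0 ≤ C := by
    have h := hC 0 h01 1 h11
    have h1 : |(0 : ℝ) - 1| ^ α = 1 := by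
      rw [show |(0:ℝ) - 1| = 1 by norm_num, Real.one_rpow]
    rw [h1, mul_one] at h
    exact le_trans (abs_nonneg _) h
  set R : ℝ := |x 0| + C with hR
  have hR0 : 0 ≤ R := by positivity
  have hxbd : ∀ t ∈ Set.Icc (0 : ℝ) 1, x t ∈ Set.Icc (-R) R := by
    intro t ht
    have h1 := hC t ht 0 h01
    have h2 : |t - 0| ^ α ≤ 1 := by
      rw [sub_zero]
      have hle : |t| ≤ 1 := by rw [abs_of_nonneg ht.1]; exact ht.2
      calc |t| ^ α ≤ 1 ^ α := Real.rpow_le_rpow (abs_nonneg t) hle (by linarith)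
        _ = 1 := Real.one_rpow α
    have h3 : |x t - x 0| ≤ C := le_trans h1 (by nlinarith)
    have h4 : |x t| ≤ |x 0| + C := by
      calc |x t| = |x 0 + (x t - x 0)| := by ring_nf
        _ ≤ |x 0| + |x t - x 0| := abs_add_le _ _
        _ ≤ |x 0| + C := by linarith
    exact abs_le.1 h4
  -- Lipschitz bound for the derivative of F on the compact box
  have hh1 : ContDiff ℝ 1 (fderiv ℝ F) := hF.fderiv_right (by norm_num)
  have hhd : Differentiable ℝ (fderiv ℝ F) := hh1.differentiable one_ne_zero
  have hhc : Continuous (fderiv ℝ (fderiv ℝ F)) := hh1.continuous_fderiv one_ne_zero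
  obtain ⟨M₀, hM₀⟩ := (isCompact_Icc.prod isCompact_Icc).exists_bound_of_continuousOn
    (s := (Set.Icc (-R) R) ×ˢ (Set.Icc (-R) R)) (f := fderiv ℝ (fderiv ℝ F)) hhc.continuousOn
  set M : ℝ := max M₀ 0 with hM
  have hMnn : 0 ≤ M := le_max_right _ _
  have hLip : ∀ p ∈ (Set.Icc (-R) R) ×ˢ (Set.Icc (-R) R),
      ∀ q ∈ (Set.Icc (-R) R) ×ˢ (Set.Icc (-R) R),
      ‖fderiv ℝ F p - fderiv ℝ F q‖ ≤ M * ‖p - q‖ := by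
    intro p hp q hq
    exact Convex.norm_image_sub_le_of_norm_fderiv_le (fun z _ => hhd z)
      (fun z hz => le_trans (hM₀ z hz) (le_max_left _ _))
      ((convex_Icc _ _).prod (convex_Icc _ _)) hq hp
  have key := fun a ha b hb => taylor_aux F hF hdiag f hf R M hMnn hLip a ha b hb
  -- the squeeze
  apply squeeze_zero_norm' (a := fun n : ℕ => M * C ^ 2 * (n : ℝ) ^ (1 - 2 * α))
  · filter_upwards [eventually_ge_atTop 1] with n hn
    have hn0 : (0 : ℝ) < (n : ℝ) := by exact_mod_cast hn
    have hmem : ∀ i ≤ n, (i : ℝ) / n ∈ Set.Icc (0 : ℝ) 1 := by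
      intro i hi
      constructor
      · positivity
      · rw [div_le_one hn0]; exact_mod_cast hi
    have hterm : ∀ i ∈ Finset.range n,
        ‖F (x ((i : ℝ) / n), x (((i : ℝ) + 1) / n))
          - f (x ((i : ℝ) / n)) * (x (((i : ℝ) + 1) / n) - x ((i : ℝ) / n))‖
        ≤ M * C ^ 2 * ((n : ℝ) ^ α)⁻¹ ^ 2 := by
      intro i hi
      rw [Finset.mem_range] at hi
      have hti : (i : ℝ) / n ∈ Set.Icc (0 : ℝ) 1 := hmem i (le_of_lt hi)
      have hti1 : ((i : ℝ) + 1) / n ∈ Set.Icc (0 : ℝ) 1 := by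
        have := hmem (i + 1) hi
        simpa [Nat.cast_add] using this
      have hΔ : |x (((i : ℝ) + 1) / n) - x ((i : ℝ) / n)| ≤ C * ((n : ℝ) ^ α)⁻¹ := by
        have h1 := hC (((i : ℝ) + 1) / n) hti1 ((i : ℝ) / n) hti
        have h2 : |((i : ℝ) + 1) / n - (i : ℝ) / n| = ((n : ℝ))⁻¹ := by
          rw [div_sub_div_same, add_sub_cancel_left, abs_of_nonneg (by positivity)]
          simp
        rw [h2, Real.inv_rpow (le_of_lt hn0)] at h1
        exact h1
      have hkey := key _ (hxbd _ hti) _ (hxbd _ hti1)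
      rw [Real.norm_eq_abs]
      calc |F (x ((i : ℝ) / n), x (((i : ℝ) + 1) / n))
          - f (x ((i : ℝ) / n)) * (x (((i : ℝ) + 1) / n) - x ((i : ℝ) / n))|
          ≤ M * (x (((i : ℝ) + 1) / n) - x ((i : ℝ) / n)) ^ 2 := hkey
        _ ≤ M * (C * ((n : ℝ) ^ α)⁻¹) ^ 2 := by
            apply mul_le_mul_of_nonneg_left _ hMnn
            rw [← sq_abs]
            apply pow_le_pow_left₀ (abs_nonneg _) hΔ 2
        _ = M * C ^ 2 * ((n : ℝ) ^ α)⁻¹ ^ 2 := by ring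
    calc ‖(∑ i ∈ Finset.range n, F (x ((i : ℝ) / n), x (((i : ℝ) + 1) / n)))
        - ∑ i ∈ Finset.range n,
            f (x ((i : ℝ) / n)) * (x (((i : ℝ) + 1) / n) - x ((i : ℝ) / n))‖
        = ‖∑ i ∈ Finset.range n, (F (x ((i : ℝ) / n), x (((i : ℝ) + 1) / n))
            - f (x ((i : ℝ) / n)) * (x (((i : ℝ) + 1) / n) - x ((i : ℝ) / n)))‖ := by
          rw [Finset.sum_sub_distrib]
      _ ≤ ∑ i ∈ Finset.range n, ‖F (x ((i : ℝ) / n), x (((i : ℝ) + 1) / n))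
            - f (x ((i : ℝ) / n)) * (x (((i : ℝ) + 1) / n) - x ((i : ℝ) / n))‖ :=
          norm_sum_le _ _
      _ ≤ ∑ _i ∈ Finset.range n, M * C ^ 2 * ((n : ℝ) ^ α)⁻¹ ^ 2 :=
          Finset.sum_le_sum hterm
      _ = n * (M * C ^ 2 * ((n : ℝ) ^ α)⁻¹ ^ 2) := by
          rw [Finset.sum_const, Finset.card_range]; simp [nsmul_eq_mul]
      _ = M * C ^ 2 * (n : ℝ) ^ (1 - 2 * α) := by
          rw [inv_pow, ← Real.rpow_natCast ((n : ℝ) ^ α) 2, ← Real.rpow_mul (le_of_lt hn0),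
            Real.rpow_sub hn0, Real.rpow_one,
            show α * ((2:ℕ):ℝ) = 2 * α by push_cast; ring, div_eq_mul_inv]
          ring
  · have h1 : Tendsto (fun n : ℕ => ((n : ℝ)) ^ (1 - 2 * α)) atTop (nhds 0) := by
      have h2 := (tendsto_rpow_neg_atTop (y := 2 * α - 1) (by linarith)).comp
        tendsto_natCast_atTop_atTop
      have : -(2 * α - 1) = 1 - 2 * α := by ring
      simpa [Function.comp_def, this] using h2
    have := h1.const_mul (M * C ^ 2)
    simpa using this
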